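/- Let v_1, v_2, … be i.i.d. random variables taking values in [0, β] with mean EV, and let V̂_k = (1/k)∑_{i=1}^k v_i. Define N to be the first k such that V̂_k > EV − Δ, for Δ > 0. Then E[N] ≤ 1 + β²/Δ². -/

import Mathlib

open MeasureTheory ProbabilityTheory
open scoped ENNReal NNReal

lemma lem_log_one_sub {x : ℝ} (h0 : 0 ≤ x) (h1 : x < 1) :
    Real.log (1 - x) ≤ -x - x^2/2 := by
  have key : MonotoneOn (fun y : ℝ => -y - y^2/2 - Real.log (1-y)) (Set.Ico 0 1) := by
    apply monotoneOn_of_deriv_nonneg (convex_Ico 0 1)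
    · apply ContinuousOn.sub
      · fun_prop
      · apply ContinuousOn.log (by fun_prop)
        intro y hy; simp only [Set.mem_Ico] at hy; linarith [hy.2]
    · intro y hy
      rw [interior_Ico] at hy
      have h1y : (1:ℝ) - y ≠ 0 := by simp only [Set.mem_Ioo] at hy; intro h; linarith [hy.2]
      apply DifferentiableAt.differentiableWithinAt
      apply DifferentiableAt.sub (by fun_prop)
      exact (Real.differentiableAt_log h1y).comp y (by fun_prop)
    · intro y hy
      rw [interior_Ico] at hy
      obtain ⟨hy0, hy1⟩ := hy
      have h1y : (0:ℝ) < 1 - y := by linarith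
      have hd : HasDerivAt (fun y : ℝ => -y - y^2/2 - Real.log (1-y))
          (-1 - y - (1-y)⁻¹ * (-1)) y := by
        have hlog : HasDerivAt (fun y : ℝ => Real.log (1-y)) ((1-y)⁻¹ * (-1)) y := by
          have := (Real.hasDerivAt_log h1y.ne').comp y
            (((hasDerivAt_id y).const_sub 1))
          exact this
        have h1 : HasDerivAt (fun y : ℝ => -y - y^2/2) (-1 - y) y := by
          have : HasDerivAt (fun y : ℝ => -y - y^2/2) (-1 - 2*y^1/2) y := by
            apply HasDerivAt.sub
            · exact (hasDerivAt_id y).neg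
            · exact ((hasDerivAt_pow 2 y)).div_const 2
          simpa using this.congr_deriv (by ring)
        exact h1.sub hlog
      rw [hd.deriv]
      have : (1-y)⁻¹ ≥ 1 + y := by
        rw [ge_iff_le, inv_eq_one_div, le_div_iff₀ h1y]; nlinarith
      linarith
  have h := key (by constructor <;> norm_num) (Set.mem_Ico.mpr ⟨h0, h1⟩) h0
  simp only [Real.log_one] at h
  norm_num at h
  linarith [h]

lemma lem_ulogu {u : ℝ} (h0 : 0 < u) (h1 : u ≤ 1) :
    -(u * Real.log u) ≤ (1 - u^2)/2 := by
  have key : AntitoneOn (fun y : ℝ => (1 - y^2)/2 + y * Real.log y) (Set.Ioc 0 1) := by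
    apply antitoneOn_of_deriv_nonpos (convex_Ioc 0 1)
    · apply ContinuousOn.add (by fun_prop)
      apply ContinuousOn.mul (by fun_prop)
      apply ContinuousOn.log (by fun_prop)
      intro y hy; exact ne_of_gt hy.1
    · intro y hy
      rw [interior_Ioc] at hy
      apply DifferentiableAt.differentiableWithinAt
      apply DifferentiableAt.add (by fun_prop)
      exact (differentiableAt_fun_id).mul (Real.differentiableAt_log (ne_of_gt hy.1))
    · intro y hy
      rw [interior_Ioc] at hy
      obtain ⟨hy0, hy1⟩ := hy
      have hd : HasDerivAt (fun y : ℝ => (1 - y^2)/2 + y * Real.log y)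
          (-y + (Real.log y + 1)) y := by
        apply HasDerivAt.add
        · have h2 : HasDerivAt (fun y : ℝ => (1 - y^2)/2) (-(2*y^(2-1))/2) y :=
            (((hasDerivAt_pow 2 y).const_sub 1)).div_const 2
          have : -((2:ℝ)*y^(2-1))/2 = -y := by ring_nf
          rwa [this] at h2
        · have h2 := (hasDerivAt_id y).mul (Real.hasDerivAt_log (ne_of_gt hy0))
          have : (1:ℝ) * Real.log y + id y * y⁻¹ = Real.log y + 1 := by
            simp [mul_inv_cancel₀ (ne_of_gt hy0)]
          rw [this] at h2
          exact h2
      rw [hd.deriv]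
      have hlog := Real.log_le_sub_one_of_pos hy0
      linarith
  have h := key (Set.mem_Ioc.mpr ⟨h0, h1⟩) (by constructor <;> norm_num) h1
  simp only [Real.log_one] at h
  norm_num at h
  nlinarith [h]

lemma lem_exponent {p q : ℝ} (hp0 : 0 < p) (hp1 : p ≤ 1) (hq0 : 0 < q) (hq1 : q < 1) :
    p*(1-q)*(-Real.log (1-q)) + Real.log (1 - p*q) ≤ -(p*q)^2 := by
  have h1 : Real.log (1 - p*q) ≤ -(p*q) - (p*q)^2/2 :=
    lem_log_one_sub (by positivity) (by nlinarith)
  have h2 : -((1-q) * Real.log (1-q)) ≤ (1 - (1-q)^2)/2 :=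
    lem_ulogu (by linarith) (by linarith)
  nlinarith [sq_nonneg (p*q), sq_nonneg q, mul_le_mul_of_nonneg_left h2 hp0.le,
    mul_pos hp0 hq0]

lemma lem_geom_sum {r c : ℝ} (hr0 : 0 ≤ r) (hc : 0 < c) (h : r ≤ Real.exp (-c)) :
    ∑' k : ℕ, r^(k+1) ≤ 1/c := by
  have hexp : Real.exp (-c) < 1 := Real.exp_lt_one_iff.mpr (by linarith)
  have hr1 : r < 1 := lt_of_le_of_lt h hexp
  have hsum : ∑' k : ℕ, r^(k+1) = r * (1-r)⁻¹ := by
    simp_rw [pow_succ']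
    rw [tsum_mul_left, tsum_geometric_of_lt_one hr0 hr1]
  rw [hsum]
  have h1r : 0 < 1 - r := by linarith
  have he : Real.exp (-c) * (1+c) ≤ 1 := by
    have h1 : 1 + c ≤ Real.exp c := by linarith [Real.add_one_le_exp c]
    have h2 : Real.exp (-c) * (1+c) ≤ Real.exp (-c) * Real.exp c :=
      mul_le_mul_of_nonneg_left h1 (Real.exp_pos _).le
    rwa [← Real.exp_add, neg_add_cancel, Real.exp_zero] at h2
  have hrc : r * c ≤ 1 - r := by nlinarith [mul_le_mul_of_nonneg_right h (by linarith : (0:ℝ) ≤ 1 + c)]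
  rw [mul_inv_le_iff₀ h1r, show (1:ℝ)/c*(1-r) = (1-r)/c by ring, le_div_iff₀ hc]
  linarith

set_option maxHeartbeats 1000000 in

theorem expected_stopping_time_bound
    {Ω : Type*} [MeasureSpace Ω] [IsProbabilityMeasure (ℙ : Measure Ω)]
    (β Δ : ℝ) (hβ : 0 < β) (hΔ : 0 < Δ)
    (v : ℕ → Ω → ℝ) (hmeas : ∀ i, Measurable (v i))
    (hindep : iIndepFun v ℙ)
    (hident : ∀ i, Measure.map (v i) ℙ = Measure.map (v 0) ℙ)
    (hbdd : ∀ i ω, v i ω ∈ Set.Icc 0 β)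
    (N : Ω → ℕ)
    (hN : ∀ ω, N ω = sInf {k : ℕ | 1 ≤ k ∧
        (∑ i ∈ Finset.range k, v i ω) / k > (∫ ω', v 0 ω' ∂ℙ) - Δ}) :
    ∫ ω, (N ω : ℝ) ∂ℙ ≤ 1 + β ^ 2 / Δ ^ 2 := by
  set m0 : ℝ := ∫ ω', v 0 ω' ∂ℙ with hm0def
  -- events T j : the averaging condition holds at time j
  set T : ℕ → Set Ω := fun j =>
    {ω | 1 ≤ j ∧ m0 - Δ < (∑ i ∈ Finset.range j, v i ω) / j} with hT
  have hTmeas : ∀ j, MeasurableSet (T j) := by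
    intro j
    by_cases hj : 1 ≤ j
    · have : T j = {ω | m0 - Δ < (∑ i ∈ Finset.range j, v i ω) / j} := by
        ext ω; simp [hT, hj]
      rw [this]
      exact measurableSet_lt measurable_const
        ((Finset.measurable_sum _ (fun i _ => hmeas i)).div_const _)
    · have : T j = ∅ := by ext ω; simp [hT, hj]
      simp [this]
  set A : ℕ → Set Ω := fun k => {ω | k < N ω} with hA
  have hmem : ∀ ω k, k < N ω ↔ (∃ m, ω ∈ T m) ∧ ∀ j ≤ k, ω ∉ T j := by
    intro ω k
    have hNo : N ω = sInf {j | ω ∈ T j} := by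
      rw [hN ω]; congr 1
    rw [hNo]
    constructor
    · intro hk
      have hne : {j | ω ∈ T j}.Nonempty := by
        by_contra hemp
        rw [Set.not_nonempty_iff_eq_empty] at hemp
        rw [hemp, Nat.sInf_empty] at hk; omega
      obtain ⟨m, hm⟩ := hne
      refine ⟨⟨m, hm⟩, fun j hj hjT => ?_⟩
      have := Nat.sInf_le (s := {j | ω ∈ T j}) hjT
      omega
    · rintro ⟨⟨m, hm⟩, hall⟩
      by_contra hle
      push_neg at hle
      exact hall _ hle (Nat.sInf_mem (⟨m, hm⟩ : {j | ω ∈ T j}.Nonempty))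
  have hAmeas : ∀ k, MeasurableSet (A k) := by
    intro k
    have hAeq : A k = (⋃ m, T m) ∩ ⋂ j ∈ Set.Iic k, (T j)ᶜ := by
      ext ω
      simp only [hA, Set.mem_setOf_eq, hmem ω k, Set.mem_inter_iff, Set.mem_iUnion,
        Set.mem_iInter, Set.mem_Iic, Set.mem_compl_iff]
    rw [hAeq]
    exact (MeasurableSet.iUnion hTmeas).inter
      (MeasurableSet.biInter (Set.to_countable _) fun j _ => (hTmeas j).compl)
  have hNmeas : Measurable N := by
    apply measurable_to_countable'
    intro n
    match n with
    | 0 =>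
      have : N ⁻¹' {0} = (A 0)ᶜ := by
        ext ω; simp only [Set.mem_preimage, Set.mem_singleton_iff, Set.mem_compl_iff, hA,
          Set.mem_setOf_eq]; omega
      rw [this]; exact (hAmeas 0).compl
    | n+1 =>
      have : N ⁻¹' {n+1} = A n ∩ (A (n+1))ᶜ := by
        ext ω; simp only [Set.mem_preimage, Set.mem_singleton_iff, Set.mem_inter_iff,
          Set.mem_compl_iff, hA, Set.mem_setOf_eq]; omega
      rw [this]; exact (hAmeas n).inter (hAmeas (n+1)).compl
  -- the layer-cake formula
  have hlin : ∫⁻ ω, (N ω : ℝ≥0∞) ∂ℙ = ∑' k, ℙ (A k) := by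
    have hpt : ∀ ω, (N ω : ℝ≥0∞) = ∑' k, Set.indicator (A k) (fun _ => (1:ℝ≥0∞)) ω := by
      intro ω
      have hite : ∀ k, Set.indicator (A k) (fun _ => (1:ℝ≥0∞)) ω
          = if k < N ω then 1 else 0 := by
        intro k; simp [Set.indicator_apply, hA]
      simp_rw [hite]
      rw [tsum_eq_sum (s := Finset.range (N ω)) (fun k hk => by
        rw [Finset.mem_range] at hk
        simp [hk])]
      rw [Finset.sum_congr rfl (fun k hk => if_pos (Finset.mem_range.mp hk))]
      simp
    simp_rw [hpt]
    rw [lintegral_tsum (fun k => (measurable_const.indicator (hAmeas k)).aemeasurable)]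
    exact tsum_congr fun k => lintegral_indicator_one (hAmeas k)
  -- the helper turning a geometric tail bound into the conclusion
  have hkey : ∀ c : ℝ, 0 < c →
      (∀ k : ℕ, ℙ (A (k+1)) ≤ ENNReal.ofReal (Real.exp (-c) ^ (k+1))) →
      ∫ ω, (N ω : ℝ) ∂ℙ ≤ 1 + 1/c := by
    intro c hc hb
    have hexp1 : Real.exp (-c) < 1 := Real.exp_lt_one_iff.mpr (by linarith)
    have hsum : ∑' k, ℙ (A k) ≤ ENNReal.ofReal (1 + 1/c) := by
      rw [tsum_eq_zero_add' ENNReal.summable]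
      have h2 : ∑' k, ℙ (A (k+1)) ≤ ENNReal.ofReal (1/c) := by
        calc ∑' k, ℙ (A (k+1)) ≤ ∑' k : ℕ, ENNReal.ofReal (Real.exp (-c) ^ (k+1)) :=
              ENNReal.tsum_le_tsum hb
        _ = ENNReal.ofReal (∑' k : ℕ, Real.exp (-c) ^ (k+1)) := by
              rw [ENNReal.ofReal_tsum_of_nonneg (fun k => by positivity)]
              simp_rw [pow_succ']
              exact (summable_geometric_of_lt_one (Real.exp_pos _).le hexp1).mul_left _
        _ ≤ ENNReal.ofReal (1/c) := ENNReal.ofReal_le_ofReal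
              (lem_geom_sum (Real.exp_pos _).le hc le_rfl)
      calc ℙ (A 0) + ∑' k, ℙ (A (k+1)) ≤ 1 + ENNReal.ofReal (1/c) :=
            add_le_add prob_le_one h2
      _ = ENNReal.ofReal (1 + 1/c) := by
            rw [ENNReal.ofReal_add (by norm_num) (by positivity), ENNReal.ofReal_one]
    have hfin : ∫⁻ ω, (N ω : ℝ≥0∞) ∂ℙ ≤ ENNReal.ofReal (1 + 1/c) := hlin ▸ hsum
    have hNc : Measurable (fun ω => (N ω : ℝ)) := measurable_from_top.comp hNmeas
    have hint : Integrable (fun ω => (N ω : ℝ)) ℙ := by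
      refine ⟨hNc.aestronglyMeasurable, ?_⟩
      show ∫⁻ ω, (‖(N ω : ℝ)‖₊ : ℝ≥0∞) ∂ℙ < ⊤
      have heq : ∀ ω, (‖(N ω : ℝ)‖₊ : ℝ≥0∞) = (N ω : ℝ≥0∞) := by
        intro ω
        rw [← enorm_eq_nnnorm, Real.enorm_eq_ofReal (Nat.cast_nonneg _), ENNReal.ofReal_natCast]
      calc ∫⁻ ω, (‖(N ω : ℝ)‖₊ : ℝ≥0∞) ∂ℙ = ∫⁻ ω, (N ω : ℝ≥0∞) ∂ℙ :=
            lintegral_congr heq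
      _ ≤ ENNReal.ofReal (1 + 1/c) := hfin
      _ < ⊤ := ENNReal.ofReal_lt_top
    rw [integral_eq_lintegral_of_nonneg_ae (Filter.Eventually.of_forall fun ω =>
      Nat.cast_nonneg _) hNc.aestronglyMeasurable]
    simp_rw [ENNReal.ofReal_natCast]
    exact ENNReal.toReal_le_of_le_ofReal (by positivity) hfin
  -- integrability of exponentials
  have hvint : ∀ (c : ℝ) (i : ℕ), Integrable (fun ω => Real.exp (c * v i ω)) ℙ := by
    intro c i
    refine Integrable.mono' (integrable_const (Real.exp (|c| * β)))
      (((hmeas i).const_mul c).exp.aestronglyMeasurable) ?_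
    filter_upwards with ω
    rw [Real.norm_eq_abs, Real.abs_exp]
    apply Real.exp_le_exp.mpr
    calc c * v i ω ≤ |c| * v i ω := mul_le_mul_of_nonneg_right (le_abs_self c) (hbdd i ω).1
    _ ≤ |c| * β := mul_le_mul_of_nonneg_left (hbdd i ω).2 (abs_nonneg c)
  have hv0int : Integrable (v 0) ℙ := by
    refine Integrable.mono' (integrable_const β) (hmeas 0).aestronglyMeasurable ?_
    filter_upwards with ω
    rw [Real.norm_eq_abs, abs_of_nonneg (hbdd 0 ω).1]
    exact (hbdd 0 ω).2
  have hm0_nonneg : 0 ≤ m0 := integral_nonneg fun ω => (hbdd 0 ω).1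
  have hm0_le : m0 ≤ β := by
    calc m0 ≤ ∫ _, β ∂ℙ := integral_mono hv0int (integrable_const β) fun ω => (hbdd 0 ω).2
    _ = β := by simp
  -- inclusion of events
  have hsub : ∀ (D : ℝ), D ≤ Δ → ∀ k, 1 ≤ k →
      A k ⊆ {ω | ∑ i ∈ Finset.range k, v i ω ≤ (m0 - D) * k} := by
    intro D hD k hk ω hω
    have hkT : ω ∉ T k := ((hmem ω k).1 hω).2 k le_rfl
    simp only [hT, Set.mem_setOf_eq, not_and, not_lt] at hkT
    have hle : (∑ i ∈ Finset.range k, v i ω) / k ≤ m0 - Δ := hkT hk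
    have hkpos : (0:ℝ) < k := by exact_mod_cast Nat.pos_of_ne_zero (by omega)
    simp only [Set.mem_setOf_eq]
    calc ∑ i ∈ Finset.range k, v i ω ≤ (m0 - Δ) * k := by
          rwa [div_le_iff₀ hkpos] at hle
    _ ≤ (m0 - D) * k := by nlinarith
  -- the main Chernoff bound
  have hmain : ∀ Δ' : ℝ, 0 < Δ' → Δ' ≤ Δ → Δ' < m0 → ∀ k : ℕ, 1 ≤ k →
      ℙ (A k) ≤ ENNReal.ofReal (Real.exp (-((Δ'/β)^2)) ^ k) := by
    intro Δ' hΔ'0 hΔ'Δ hΔ'm0 k hk1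
    have hm0pos : 0 < m0 := lt_trans hΔ'0 hΔ'm0
    set q : ℝ := Δ'/m0 with hqdef
    have hq0 : 0 < q := by positivity
    have hq1 : q < 1 := (div_lt_one hm0pos).mpr hΔ'm0
    have h1q : 0 < 1 - q := by linarith
    set s : ℝ := -Real.log (1-q) with hsdef
    have hs0 : 0 < s := by
      have hlog : Real.log (1-q) < 0 := Real.log_neg h1q (by linarith)
      simp only [hsdef]; linarith
    set t : ℝ := -(s/β) with htdef
    have ht0 : t ≤ 0 := by
      have hp : 0 < s/β := by positivity
      simp only [htdef]; linarith
    have htβ : t * β = -s := by rw [htdef]; field_simp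
    have hexp_ts : Real.exp (t*β) = 1 - q := by
      rw [htβ, hsdef, neg_neg, Real.exp_log h1q]
    -- pointwise convexity bound
    have hconv : ∀ x : ℝ, 0 ≤ x → x ≤ β → Real.exp (t*x) ≤ 1 + x*(Real.exp (t*β)-1)/β := by
      intro x hx0 hxβ
      have hab : (1 - x/β) + x/β = 1 := by ring
      have hcx := convexOn_exp.2 (Set.mem_univ (0:ℝ)) (Set.mem_univ (t*β))
        (by rw [sub_nonneg, div_le_one hβ]; exact hxβ) (by positivity) hab
      simp only [smul_eq_mul, mul_zero, zero_add, Real.exp_zero, mul_one] at hcx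
      have h1 : x/β*(t*β) = t*x := by field_simp
      rw [h1] at hcx
      have h2 : (1 - x/β) + x/β*Real.exp (t*β) = 1 + x*(Real.exp (t*β)-1)/β := by
        field_simp; ring
      linarith
    -- mgf bound for a single variable
    have hmgf0 : mgf (v 0) ℙ t ≤ 1 - Δ'/β := by
      have hb : mgf (v 0) ℙ t ≤ ∫ ω, (1 + (Real.exp (t*β)-1)/β * v 0 ω) ∂ℙ := by
        apply integral_mono (hvint t 0) ((integrable_const 1).add (hv0int.const_mul _))
        intro ω
        calc Real.exp (t * v 0 ω) ≤ 1 + v 0 ω * (Real.exp (t*β)-1)/β :=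
              hconv (v 0 ω) (hbdd 0 ω).1 (hbdd 0 ω).2
        _ = 1 + (Real.exp (t*β)-1)/β * v 0 ω := by ring
      have hintadd : ∫ ω, (1 + (Real.exp (t*β)-1)/β * v 0 ω) ∂ℙ
          = 1 + (Real.exp (t*β)-1)/β * m0 := by
        rw [integral_add (integrable_const 1) (hv0int.const_mul _), integral_const,
          integral_const_mul]
        simp [hm0def]
      rw [hintadd, hexp_ts] at hb
      calc mgf (v 0) ℙ t ≤ 1 + (1 - q - 1)/β * m0 := hb
      _ = 1 - Δ'/β := by
        rw [hqdef]
        field_simp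
        ring
    have hmgf_eq : ∀ i, mgf (v i) ℙ t = mgf (v 0) ℙ t := by
      intro i
      show ∫ ω, Real.exp (t * v i ω) ∂ℙ = ∫ ω, Real.exp (t * v 0 ω) ∂ℙ
      have hg : ∀ μ' : Measure ℝ, AEStronglyMeasurable (fun x : ℝ => Real.exp (t*x)) μ' :=
        fun μ' => (Real.continuous_exp.comp (continuous_const.mul continuous_id)).aestronglyMeasurable
      rw [← integral_map (hmeas i).aemeasurable (hg _), hident i,
        integral_map (hmeas 0).aemeasurable (hg _)]
    -- Chernoff
    have hintsum : Integrable (fun ω => Real.exp (t * (∑ i ∈ Finset.range k, v i) ω)) ℙ :=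
      hindep.integrable_exp_mul_sum hmeas (fun i _ => hvint t i)
    have hch := measure_le_le_exp_mul_mgf (μ := ℙ) (X := ∑ i ∈ Finset.range k, v i)
      ((m0 - Δ') * k) ht0 hintsum
    rw [hindep.mgf_sum hmeas] at hch
    have hprod : ∏ i ∈ Finset.range k, mgf (v i) ℙ t = mgf (v 0) ℙ t ^ k := by
      rw [Finset.prod_congr rfl fun i _ => hmgf_eq i, Finset.prod_const, Finset.card_range]
    rw [hprod] at hch
    have hmgfnn : 0 ≤ mgf (v 0) ℙ t := mgf_nonneg
    have h1Δβ : 0 ≤ 1 - Δ'/β := by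
      rw [sub_nonneg, div_le_one hβ]; linarith
    have hrhs : Real.exp (-t * ((m0 - Δ') * k)) * mgf (v 0) ℙ t ^ k
        ≤ Real.exp (-((Δ'/β)^2)) ^ k := by
      have hA1 : Real.exp (-t * ((m0 - Δ') * k)) = Real.exp ((m0-Δ')*s/β) ^ k := by
        rw [← Real.exp_nat_mul]
        congr 1
        rw [htdef]
        push_cast
        ring
      have hA2 : mgf (v 0) ℙ t ^ k ≤ (1 - Δ'/β) ^ k := pow_le_pow_left₀ hmgfnn hmgf0 k
      have hbase : Real.exp ((m0-Δ')*s/β) * (1 - Δ'/β) ≤ Real.exp (-((Δ'/β)^2)) := by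
        set p : ℝ := m0/β with hpdef
        have hp0 : 0 < p := by positivity
        have hp1 : p ≤ 1 := by rw [hpdef, div_le_one hβ]; exact hm0_le
        have hpq : Δ'/β = p*q := by
          rw [hpdef, hqdef]; field_simp
        have h1pq : 0 < 1 - p*q := by
          rw [← hpq, sub_pos, div_lt_one hβ]; linarith
        have he1 : (m0-Δ')*s/β = p*(1-q)*s := by
          rw [hpdef, hqdef]; field_simp
        rw [he1, hpq]
        calc Real.exp (p*(1-q)*s) * (1-p*q)
            = Real.exp (p*(1-q)*s + Real.log (1-p*q)) := by
              rw [Real.exp_add, Real.exp_log h1pq]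
        _ ≤ Real.exp (-(p*q)^2) := by
              apply Real.exp_le_exp.mpr
              have hle := lem_exponent hp0 hp1 hq0 hq1
              rw [hsdef]
              linarith
      calc Real.exp (-t*((m0-Δ')*k)) * mgf (v 0) ℙ t ^ k
          ≤ Real.exp ((m0-Δ')*s/β) ^ k * (1-Δ'/β)^k := by
            rw [hA1]
            exact mul_le_mul_of_nonneg_left hA2 (by positivity)
      _ = (Real.exp ((m0-Δ')*s/β) * (1-Δ'/β))^k := (mul_pow _ _ _).symm
      _ ≤ Real.exp (-((Δ'/β)^2)) ^ k := pow_le_pow_left₀ (by positivity) hbase k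
    have hseteq : {ω | (∑ i ∈ Finset.range k, v i) ω ≤ (m0 - Δ') * k}
        = {ω | ∑ i ∈ Finset.range k, v i ω ≤ (m0 - Δ') * k} := by
      simp [Finset.sum_apply]
    calc ℙ (A k) ≤ ℙ {ω | (∑ i ∈ Finset.range k, v i) ω ≤ (m0 - Δ') * k} := by
          rw [hseteq]; exact measure_mono (hsub Δ' hΔ'Δ k hk1)
    _ = ENNReal.ofReal ((ℙ {ω | (∑ i ∈ Finset.range k, v i) ω ≤ (m0-Δ')*k}).toReal) :=
          (ENNReal.ofReal_toReal (measure_ne_top _ _)).symm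
    _ ≤ ENNReal.ofReal (Real.exp (-((Δ'/β)^2)) ^ k) :=
          ENNReal.ofReal_le_ofReal (le_trans hch hrhs)
  have hfrac : ∀ d : ℝ, 0 < d → 1/((d/β)^2) = β^2/d^2 := by
    intro d hd
    rw [div_pow, one_div_div]
  rcases lt_trichotomy m0 Δ with hc | hc | hc
  · -- trivial case : the event is empty for k ≥ 1
    have htriv : ∀ k, 1 ≤ k → ℙ (A k) = 0 := by
      intro k hk
      refine measure_mono_null ((hsub Δ le_rfl k hk).trans ?_) (measure_empty (μ := ℙ))
      intro ω hω
      exfalso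
      simp only [Set.mem_setOf_eq] at hω
      have h1 : 0 ≤ ∑ i ∈ Finset.range k, v i ω :=
        Finset.sum_nonneg fun i _ => (hbdd i ω).1
      have h2 : (m0 - Δ) * k < 0 := by
        apply mul_neg_of_neg_of_pos (by linarith)
        exact_mod_cast Nat.pos_of_ne_zero (by omega)
      linarith
    have := hkey ((Δ/β)^2) (by positivity) (fun k => by
      rw [htriv (k+1) (by omega)]; exact zero_le)
    rwa [hfrac Δ hΔ] at this
  · -- boundary case : limit over Δ' < Δ
    have hgoal : ∀ Δ', 0 < Δ' → Δ' < Δ → ∫ ω, (N ω : ℝ) ∂ℙ ≤ 1 + β^2/Δ'^2 := by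
      intro Δ' h1 h2
      have := hkey ((Δ'/β)^2) (by positivity)
        (fun k => hmain Δ' h1 h2.le (hc ▸ h2) (k+1) (by omega))
      rwa [hfrac Δ' h1] at this
    have ht : Filter.Tendsto (fun d : ℝ => 1 + β^2/d^2)
        (nhdsWithin Δ (Set.Iio Δ)) (nhds (1 + β^2/Δ^2)) := by
      apply Filter.Tendsto.mono_left _ nhdsWithin_le_nhds
      exact (ContinuousAt.add continuousAt_const (ContinuousAt.div continuousAt_const
        ((continuous_pow 2).continuousAt) (pow_ne_zero 2 (ne_of_gt hΔ)))).tendsto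
    apply ge_of_tendsto ht
    filter_upwards [self_mem_nhdsWithin,
      (eventually_gt_nhds hΔ).filter_mono nhdsWithin_le_nhds] with d hd1 hd2
    exact hgoal d hd2 hd1
  · -- main case
    have := hkey ((Δ/β)^2) (by positivity)
      (fun k => hmain Δ hΔ le_rfl hc (k+1) (by omega))
    rwa [hfrac Δ hΔ] at this
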